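/- arXiv:2101.04831 — 8 statements merged into one kernel-verified Lean document; each statement's English description precedes it below -/
import Mathlib

section
/- Let (g, [·,·]) be a Leibniz algebra over a field K of characteristic zero, (V, ρ^L, ρ^R) a representation of g, and R, S : V → g linear maps. Equip g ⊕ g ⊕ V with the Leibniz bracket [(x₁, x₂, u), (y₁, y₂, v)] = ([x₁,y₁], [x₂,y₂], ρ^L(x₁)v + ρ^R(y₂)u), and define linear maps R̃, S̃ : g ⊕ g ⊕ V → g ⊕ g ⊕ V by R̃(x₁, x₂, u) = (R(u), 0, 0) and S̃(x₁, x₂, u) = (0, S(u), 0). Then (R, S) is a relative Rota-Baxter system on g with respect to (V, ρ^L, ρ^R) if and only if (R̃, S̃) is a Rota-Baxter system on the Leibniz algebra g ⊕ g ⊕ V, i.e. [R̃a, R̃b] = R̃([R̃a, b] + [a, S̃b]) and [S̃a, S̃b] = S̃([R̃a, b] + [a, S̃b]) for all a, b ∈ g ⊕ g ⊕ V. -/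
/-- `(R, S)` is a relative Rota-Baxter system on `g` with respect to `(V, ρL, ρR)` iff
the lifted pair `(R̃, S̃)` is a Rota-Baxter system on the Leibniz algebra `g ⊕ g ⊕ V`. -/
theorem stmt3 (K : Type*) [Field K] [CharZero K]
    (g : Type*) [AddCommGroup g] [Module K g]
    (V : Type*) [AddCommGroup V] [Module K V]
    (b : g →ₗ[K] g →ₗ[K] g)
    (hleib : ∀ x y z : g, b x (b y z) = b (b x y) z + b y (b x z))
    (ρL ρR : g →ₗ[K] Module.End K V)
    (hrep1 : ∀ x y : g, ρL (b x y) = ρL x * ρL y - ρL y * ρL x)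
    (hrep2 : ∀ x y : g, ρR (b x y) = ρL x * ρR y - ρR y * ρL x)
    (hrep3 : ∀ x y : g, ρR y * ρL x = -(ρR y * ρR x))
    (R S : V →ₗ[K] g)
    (Br : g × g × V → g × g × V → g × g × V)
    (hBr : ∀ (x₁ x₂ : g) (u : V) (y₁ y₂ : g) (v : V),
      Br (x₁, x₂, u) (y₁, y₂, v) = (b x₁ y₁, b x₂ y₂, ρL x₁ v + ρR y₂ u))
    (Rt St : g × g × V → g × g × V)
    (hRt : ∀ (x₁ x₂ : g) (u : V), Rt (x₁, x₂, u) = (R u, 0, 0))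
    (hSt : ∀ (x₁ x₂ : g) (u : V), St (x₁, x₂, u) = (0, S u, 0)) :
    ((∀ u v : V,
        b (R u) (R v) = R (ρL (R u) v + ρR (S v) u) ∧
        b (S u) (S v) = S (ρL (R u) v + ρR (S v) u))
      ↔ (∀ p q : g × g × V,
        Br (Rt p) (Rt q) = Rt (Br (Rt p) q + Br p (St q)) ∧
        Br (St p) (St q) = St (Br (Rt p) q + Br p (St q)))) := by
  constructor
  · rintro h ⟨x₁, x₂, u⟩ ⟨y₁, y₂, v⟩
    obtain ⟨h1, h2⟩ := h u v
    constructor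
    · simp [hRt, hSt, hBr, Prod.ext_iff, Prod.mk_add_mk, h1]
    · simp [hRt, hSt, hBr, Prod.ext_iff, Prod.mk_add_mk, h2]
  · intro h u v
    have := h (0, 0, u) (0, 0, v)
    simp [hRt, hSt, hBr, Prod.ext_iff, Prod.mk_add_mk] at this
    exact ⟨by simpa using this.1, by simpa using this.2⟩
end

section
/- Let (g, [·,·]) be a Leibniz algebra over a field K of characteristic zero, (V, ρ^L, ρ^R) a representation of g, and R, S : V → g linear maps. Equip g ⊕ g ⊕ V with the Leibniz bracket [(x₁, x₂, u), (y₁, y₂, v)] = ([x₁,y₁], [x₂,y₂], ρ^L(x₁)v + ρ^R(y₂)u), and define the linear map N : g ⊕ g ⊕ V → g ⊕ g ⊕ V by N(x₁, x₂, u) = (R(u), S(u), 0). Then (R, S) is a relative Rota-Baxter system on g with respect to (V, ρ^L, ρ^R) if and only if N is a Nijenhuis operator on the Leibniz algebra g ⊕ g ⊕ V. -/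
/-- `(R, S)` is a relative Rota-Baxter system on `g` with respect to `(V, ρL, ρR)` iff
`N(x₁,x₂,u) = (Ru, Su, 0)` is a Nijenhuis operator on the Leibniz algebra `g ⊕ g ⊕ V`. -/
theorem stmt4 (K : Type*) [Field K] [CharZero K]
    (g : Type*) [AddCommGroup g] [Module K g]
    (V : Type*) [AddCommGroup V] [Module K V]
    (b : g →ₗ[K] g →ₗ[K] g)
    (hleib : ∀ x y z : g, b x (b y z) = b (b x y) z + b y (b x z))
    (ρL ρR : g →ₗ[K] Module.End K V)
    (hrep1 : ∀ x y : g, ρL (b x y) = ρL x * ρL y - ρL y * ρL x)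
    (hrep2 : ∀ x y : g, ρR (b x y) = ρL x * ρR y - ρR y * ρL x)
    (hrep3 : ∀ x y : g, ρR y * ρL x = -(ρR y * ρR x))
    (R S : V →ₗ[K] g)
    (Br : g × g × V → g × g × V → g × g × V)
    (hBr : ∀ (x₁ x₂ : g) (u : V) (y₁ y₂ : g) (v : V),
      Br (x₁, x₂, u) (y₁, y₂, v) = (b x₁ y₁, b x₂ y₂, ρL x₁ v + ρR y₂ u))
    (N : g × g × V → g × g × V)
    (hN : ∀ (x₁ x₂ : g) (u : V), N (x₁, x₂, u) = (R u, S u, 0)) :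
    ((∀ u v : V,
        b (R u) (R v) = R (ρL (R u) v + ρR (S v) u) ∧
        b (S u) (S v) = S (ρL (R u) v + ρR (S v) u))
      ↔ (∀ p q : g × g × V,
        Br (N p) (N q) = N (Br (N p) q + Br p (N q) - N (Br p q)))) := by
  constructor
  · rintro h ⟨x₁, x₂, u⟩ ⟨y₁, y₂, v⟩
    obtain ⟨h1, h2⟩ := h u v
    simp only [hN, hBr, Prod.mk_add_mk, Prod.mk_sub_mk, map_zero, add_zero, zero_add,
      LinearMap.zero_apply]
    simp [hN, h1, h2]
  · intro h u v
    have := h (0, 0, u) (0, 0, v)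
    simp only [hN, hBr, Prod.mk_add_mk, Prod.mk_sub_mk, map_zero, add_zero, zero_add,
      LinearMap.zero_apply, sub_zero] at this
    simp only [hN, Prod.mk.injEq] at this
    exact ⟨this.1, this.2.1⟩
end

section
/- Let (g, [·,·]) be a Leibniz algebra over a field K of characteristic zero, (V, ρ^L, ρ^R) a representation of g, and let R, S : V → g be invertible (bijective) linear maps. Then (R, S) is a relative Rota-Baxter system on g with respect to (V, ρ^L, ρ^R) if and only if the pair (R⁻¹, S⁻¹) is an invertible 1-cocycle system, i.e. for all x, y ∈ g: R⁻¹([x,y]) = ρ^L(x)(R⁻¹ y) + ρ^R(S(R⁻¹ y))(R⁻¹ x) and S⁻¹([x,y]) = ρ^L(R(S⁻¹ x))(S⁻¹ y) + ρ^R(y)(S⁻¹ x). -/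
/-- A pair `(R, S)` of invertible linear maps `V → g` is a relative Rota-Baxter system
iff `(R⁻¹, S⁻¹)` is an invertible 1-cocycle system. -/
theorem stmt5 (K : Type*) [Field K] [CharZero K]
    (g : Type*) [AddCommGroup g] [Module K g]
    (V : Type*) [AddCommGroup V] [Module K V]
    (b : g →ₗ[K] g →ₗ[K] g)
    (hleib : ∀ x y z : g, b x (b y z) = b (b x y) z + b y (b x z))
    (ρL ρR : g →ₗ[K] Module.End K V)
    (hrep1 : ∀ x y : g, ρL (b x y) = ρL x * ρL y - ρL y * ρL x)
    (hrep2 : ∀ x y : g, ρR (b x y) = ρL x * ρR y - ρR y * ρL x)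
    (hrep3 : ∀ x y : g, ρR y * ρL x = -(ρR y * ρR x))
    (R S : V →ₗ[K] g)
    (Rinv Sinv : g → V)
    (hRinv₁ : Function.LeftInverse Rinv R) (hRinv₂ : Function.RightInverse Rinv R)
    (hSinv₁ : Function.LeftInverse Sinv S) (hSinv₂ : Function.RightInverse Sinv S) :
    ((∀ u v : V,
        b (R u) (R v) = R (ρL (R u) v + ρR (S v) u) ∧
        b (S u) (S v) = S (ρL (R u) v + ρR (S v) u))
      ↔ (∀ x y : g,
        Rinv (b x y) = ρL x (Rinv y) + ρR (S (Rinv y)) (Rinv x) ∧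
        Sinv (b x y) = ρL (R (Sinv x)) (Sinv y) + ρR y (Sinv x))) := by
  constructor
  · intro h x y
    constructor
    · have h1 := (h (Rinv x) (Rinv y)).1
      rw [hRinv₂ x, hRinv₂ y] at h1
      rw [h1, hRinv₁]
    · have h2 := (h (Sinv x) (Sinv y)).2
      rw [hSinv₂ x, hSinv₂ y] at h2
      rw [h2, hSinv₁]
  · intro h u v
    constructor
    · have h1 := (h (R u) (R v)).1
      rw [hRinv₁ u, hRinv₁ v] at h1
      rw [← hRinv₂ (b (R u) (R v)), h1]
    · have h2 := (h (S u) (S v)).2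
      rw [hSinv₁ u, hSinv₁ v] at h2
      rw [← hSinv₂ (b (S u) (S v)), h2]
end

section
/- Let (g, [·,·]) be a nondegenerate Leibniz algebra over a field K of characteristic zero, i.e. if [x, y] = 0 for all y ∈ g then x = 0, and if [x, y] = 0 for all x ∈ g then y = 0. Suppose R : g → g is a left g-linear map (R([x,y]) = [x, Ry] for all x, y) and S : g → g is a right g-linear map (S([x,y]) = [Sx, y] for all x, y). Then (R, S) is a Rota-Baxter system on (g, [·,·]) if and only if R∘S = 0 and S∘R = 0. -/
/-- On a nondegenerate Leibniz algebra, if `R` is left `g`-linear and `S` is right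
`g`-linear, then `(R, S)` is a Rota-Baxter system iff `R ∘ S = 0` and `S ∘ R = 0`. -/
theorem stmt9 (K : Type*) [Field K] [CharZero K]
    (g : Type*) [AddCommGroup g] [Module K g]
    (b : g →ₗ[K] g →ₗ[K] g)
    (hleib : ∀ x y z : g, b x (b y z) = b (b x y) z + b y (b x z))
    (hnd₁ : ∀ x : g, (∀ y : g, b x y = 0) → x = 0)
    (hnd₂ : ∀ y : g, (∀ x : g, b x y = 0) → y = 0)
    (R S : g →ₗ[K] g)
    (hR : ∀ x y : g, R (b x y) = b x (R y))
    (hS : ∀ x y : g, S (b x y) = b (S x) y) :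
    ((∀ x y : g,
        b (R x) (R y) = R (b (R x) y + b x (S y)) ∧
        b (S x) (S y) = S (b (R x) y + b x (S y)))
      ↔ (R ∘ₗ S = 0 ∧ S ∘ₗ R = 0)) := by
  constructor
  · intro h
    constructor
    · ext y
      apply hnd₂
      intro x
      have h1 := (h x y).1
      rw [map_add, hR, hR] at h1
      simpa using h1.symm
    · ext x
      apply hnd₁
      intro y
      have h2 := (h x y).2
      rw [map_add, hS, hS] at h2
      simpa using h2.symm
  · rintro ⟨h1, h2⟩ x y
    have e1 : R (S y) = 0 := congrFun (congrArg DFunLike.coe h1) y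
    have e2 : S (R x) = 0 := congrFun (congrArg DFunLike.coe h2) x
    constructor
    · rw [map_add, hR, hR, e1]
      simp
    · rw [map_add, hS, hS, e2]
      simp
end

section
/- Let (g, [·,·], R, ∂) be a differential Rota-Baxter Leibniz algebra of weight λ over a field K of characteristic zero, i.e. (g, [·,·]) is a Leibniz algebra and R, ∂ : g → g are linear maps satisfying (dR1) [Rx, Ry] = R([Rx, y] + [x, Ry] + λ[x, y]), (dR2) ∂([x,y]) = [∂x, y] + [x, ∂y] + λ[∂x, ∂y], and (dR3) ∂∘R = Id. Then the map σ : g → g defined by σ(x) = x + λ∂(x) is a Leibniz algebra morphism, σ∘R = R + λ·Id, and R is a σ-twisted Rota-Baxter operator, i.e. [Rx, Ry] = R([Rx, y] + [x, σ(Ry)]) for all x, y ∈ g. -/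
/-- For a differential Rota-Baxter Leibniz algebra `(g, [·,·], R, ∂)` of weight `λ`,
the map `σ(x) = x + λ∂(x)` is a Leibniz algebra morphism, `σ ∘ R = R + λ·Id`, and
`R` is a `σ`-twisted Rota-Baxter operator. -/
theorem stmt11 (K : Type*) [Field K] [CharZero K]
    (g : Type*) [AddCommGroup g] [Module K g]
    (b : g →ₗ[K] g →ₗ[K] g)
    (hleib : ∀ x y z : g, b x (b y z) = b (b x y) z + b y (b x z))
    (lam : K) (R D : g →ₗ[K] g)
    (hdR1 : ∀ x y : g, b (R x) (R y) = R (b (R x) y + b x (R y) + lam • b x y))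
    (hdR2 : ∀ x y : g, D (b x y) = b (D x) y + b x (D y) + lam • b (D x) (D y))
    (hdR3 : ∀ x : g, D (R x) = x)
    (σ : g → g)
    (hσ : ∀ x : g, σ x = x + lam • D x) :
    (∀ x y : g, σ (b x y) = b (σ x) (σ y)) ∧
    (∀ x : g, σ (R x) = R x + lam • x) ∧
    (∀ x y : g, b (R x) (R y) = R (b (R x) y + b x (σ (R y)))) := by
  refine ⟨fun x y => ?_, fun x => by rw [hσ, hdR3], fun x y => ?_⟩
  · simp only [hσ, hdR2, map_add, map_smul, LinearMap.add_apply, LinearMap.smul_apply,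
      smul_add]
    module
  · rw [hσ, hdR3, hdR1]
    congr 1
    simp only [map_add, map_smul, smul_add]
    abel
end

section
/- Let (g, [·,·]) be a Leibniz algebra over a field K of characteristic zero, with bracket regarded as the linear map μ : g ⊗ g → g, and let T : g ⊗ g → g ⊗ g be a weak pseudotwistor with weak companion τ : g ⊗ g ⊗ g → g ⊗ g ⊗ g; i.e. (η₁₂ ⊗ Id)∘τ = τ∘(η₁₂ ⊗ Id) where η₁₂ is the flip on the first two tensor factors, T∘(Id ⊗ μ)∘(Id ⊗ T) = (Id ⊗ μ)∘τ, and T∘(μ ⊗ Id)∘(T ⊗ Id) = (μ ⊗ Id)∘τ. Then the bilinear operation defined by μ∘T is a Leibniz algebra structure on g. -/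
open TensorProduct

/-- A weak pseudotwistor `T` on a Leibniz algebra `(g, μ)` induces a new Leibniz
algebra structure `μ ∘ T` on `g`. -/
theorem stmt14 (K : Type*) [Field K] [CharZero K]
    (g : Type*) [AddCommGroup g] [Module K g]
    (μ : g ⊗[K] g →ₗ[K] g)
    (hleib : ∀ x y z : g,
      μ (x ⊗ₜ[K] μ (y ⊗ₜ[K] z)) = μ (μ (x ⊗ₜ[K] y) ⊗ₜ[K] z) + μ (y ⊗ₜ[K] μ (x ⊗ₜ[K] z)))
    (T : g ⊗[K] g →ₗ[K] g ⊗[K] g)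
    (τ : g ⊗[K] (g ⊗[K] g) →ₗ[K] g ⊗[K] (g ⊗[K] g))
    -- `(η₁₂ ⊗ Id) ∘ τ = τ ∘ (η₁₂ ⊗ Id)`, where `η₁₂ ⊗ Id` is expressed on
    -- `g ⊗ (g ⊗ g)` via the associator
    (hcomm :
      ((TensorProduct.assoc K g g g).toLinearMap
          ∘ₗ LinearMap.rTensor g (TensorProduct.comm K g g).toLinearMap
          ∘ₗ (TensorProduct.assoc K g g g).symm.toLinearMap) ∘ₗ τ
        = τ ∘ₗ ((TensorProduct.assoc K g g g).toLinearMap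
          ∘ₗ LinearMap.rTensor g (TensorProduct.comm K g g).toLinearMap
          ∘ₗ (TensorProduct.assoc K g g g).symm.toLinearMap))
    -- `T ∘ (Id ⊗ μ) ∘ (Id ⊗ T) = (Id ⊗ μ) ∘ τ`
    (h1 : T ∘ₗ LinearMap.lTensor g μ ∘ₗ LinearMap.lTensor g T = LinearMap.lTensor g μ ∘ₗ τ)
    -- `T ∘ (μ ⊗ Id) ∘ (T ⊗ Id) = (μ ⊗ Id) ∘ τ`, with `μ ⊗ Id` and `T ⊗ Id`
    -- expressed on `g ⊗ (g ⊗ g)` via the associator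
    (h2 : T ∘ₗ (LinearMap.rTensor g μ ∘ₗ (TensorProduct.assoc K g g g).symm.toLinearMap)
          ∘ₗ ((TensorProduct.assoc K g g g).toLinearMap
            ∘ₗ LinearMap.rTensor g T ∘ₗ (TensorProduct.assoc K g g g).symm.toLinearMap)
        = (LinearMap.rTensor g μ ∘ₗ (TensorProduct.assoc K g g g).symm.toLinearMap) ∘ₗ τ) :
    ∀ x y z : g,
      μ (T (x ⊗ₜ[K] μ (T (y ⊗ₜ[K] z)))) =
        μ (T (μ (T (x ⊗ₜ[K] y)) ⊗ₜ[K] z)) + μ (T (y ⊗ₜ[K] μ (T (x ⊗ₜ[K] z)))) := by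

  intro x y z
  set e : g ⊗[K] (g ⊗[K] g) →ₗ[K] g ⊗[K] (g ⊗[K] g) :=
    (TensorProduct.assoc K g g g).toLinearMap
      ∘ₗ LinearMap.rTensor g (TensorProduct.comm K g g).toLinearMap
      ∘ₗ (TensorProduct.assoc K g g g).symm.toLinearMap with he
  set w : g ⊗[K] (g ⊗[K] g) := τ (x ⊗ₜ[K] (y ⊗ₜ[K] z)) with hw
  -- key: linearized Leibniz identity
  have key : μ ∘ₗ LinearMap.lTensor g μ
      = (μ ∘ₗ LinearMap.rTensor g μ ∘ₗ (TensorProduct.assoc K g g g).symm.toLinearMap)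
        + (μ ∘ₗ LinearMap.lTensor g μ ∘ₗ e) := by
    ext a b c
    simpa [he] using hleib a b c
  have keyw := LinearMap.congr_fun key w
  simp only [LinearMap.add_apply, LinearMap.coe_comp, Function.comp_apply] at keyw
  -- step 1: LHS
  have H1 := LinearMap.congr_fun h1 (x ⊗ₜ[K] (y ⊗ₜ[K] z))
  simp only [LinearMap.coe_comp, Function.comp_apply, LinearMap.lTensor_tmul] at H1
  -- step 3: first term via h2
  have H2 := LinearMap.congr_fun h2 (x ⊗ₜ[K] (y ⊗ₜ[K] z))
  simp only [LinearMap.coe_comp, Function.comp_apply, LinearMap.lTensor_tmul,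
    LinearMap.rTensor_tmul, LinearEquiv.coe_coe, TensorProduct.assoc_symm_tmul,
    TensorProduct.assoc_tmul] at H2
  -- step 4: second term via hcomm and h1
  have Hc := LinearMap.congr_fun hcomm (x ⊗ₜ[K] (y ⊗ₜ[K] z))
  have Hc' : e w = τ (y ⊗ₜ[K] (x ⊗ₜ[K] z)) := by
    simpa [he, hw, TensorProduct.assoc_symm_tmul, TensorProduct.assoc_tmul] using Hc
  have H1' := LinearMap.congr_fun h1 (y ⊗ₜ[K] (x ⊗ₜ[K] z))
  simp only [LinearMap.coe_comp, Function.comp_apply, LinearMap.lTensor_tmul] at H1'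
  calc μ (T (x ⊗ₜ[K] μ (T (y ⊗ₜ[K] z))))
      = μ ((LinearMap.lTensor g μ) w) := by rw [H1]
    _ = μ ((LinearMap.rTensor g μ) ((TensorProduct.assoc K g g g).symm.toLinearMap w))
          + μ ((LinearMap.lTensor g μ) (e w)) := keyw
    _ = μ (T (μ (T (x ⊗ₜ[K] y)) ⊗ₜ[K] z)) + μ (T (y ⊗ₜ[K] μ (T (x ⊗ₜ[K] z)))) := by
        simp only [LinearEquiv.symm_apply_apply] at H2
        simp only [hw, LinearEquiv.coe_coe]
        rw [← H2, Hc', ← H1', LinearMap.rTensor_tmul]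
end

section
/- Let (g, [·,·]) be a Leibniz algebra over a field K of characteristic zero, with bracket regarded as the linear map μ : g ⊗ g → g, and let R : g → g be a Rota-Baxter operator, i.e. [Rx, Ry] = R([Rx, y] + [x, Ry]) for all x, y ∈ g. Define T : g ⊗ g → g ⊗ g by T(x ⊗ y) = R(x) ⊗ y + x ⊗ R(y) and τ : g ⊗ g ⊗ g → g ⊗ g ⊗ g by τ(x ⊗ y ⊗ z) = R(x) ⊗ R(y) ⊗ z + R(x) ⊗ y ⊗ R(z) + x ⊗ R(y) ⊗ R(z). Then T is a weak pseudotwistor on g with weak companion τ: namely (η₁₂ ⊗ Id)∘τ = τ∘(η₁₂ ⊗ Id), T∘(Id ⊗ μ)∘(Id ⊗ T) = (Id ⊗ μ)∘τ, and T∘(μ ⊗ Id)∘(T ⊗ Id) = (μ ⊗ Id)∘τ. -/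
open TensorProduct

/-- For a Rota-Baxter operator `R` on a Leibniz algebra `(g, μ)`, the map
`T(x ⊗ y) = R(x) ⊗ y + x ⊗ R(y)` is a weak pseudotwistor with weak companion
`τ(x ⊗ y ⊗ z) = R(x) ⊗ R(y) ⊗ z + R(x) ⊗ y ⊗ R(z) + x ⊗ R(y) ⊗ R(z)`. -/
theorem stmt15 (K : Type*) [Field K] [CharZero K]
    (g : Type*) [AddCommGroup g] [Module K g]
    (μ : g ⊗[K] g →ₗ[K] g)
    (hleib : ∀ x y z : g,
      μ (x ⊗ₜ[K] μ (y ⊗ₜ[K] z)) = μ (μ (x ⊗ₜ[K] y) ⊗ₜ[K] z) + μ (y ⊗ₜ[K] μ (x ⊗ₜ[K] z)))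
    (R : g →ₗ[K] g)
    (hRB : ∀ x y : g,
      μ (R x ⊗ₜ[K] R y) = R (μ (R x ⊗ₜ[K] y) + μ (x ⊗ₜ[K] R y)))
    (T : g ⊗[K] g →ₗ[K] g ⊗[K] g)
    (hT : ∀ x y : g, T (x ⊗ₜ[K] y) = R x ⊗ₜ[K] y + x ⊗ₜ[K] R y)
    (τ : g ⊗[K] (g ⊗[K] g) →ₗ[K] g ⊗[K] (g ⊗[K] g))
    (hτ : ∀ x y z : g,
      τ (x ⊗ₜ[K] (y ⊗ₜ[K] z)) =
        R x ⊗ₜ[K] (R y ⊗ₜ[K] z) + R x ⊗ₜ[K] (y ⊗ₜ[K] R z) + x ⊗ₜ[K] (R y ⊗ₜ[K] R z)) :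
    -- `(η₁₂ ⊗ Id) ∘ τ = τ ∘ (η₁₂ ⊗ Id)`, with `η₁₂ ⊗ Id` expressed on
    -- `g ⊗ (g ⊗ g)` via the associator
    (((TensorProduct.assoc K g g g).toLinearMap
        ∘ₗ LinearMap.rTensor g (TensorProduct.comm K g g).toLinearMap
        ∘ₗ (TensorProduct.assoc K g g g).symm.toLinearMap) ∘ₗ τ
      = τ ∘ₗ ((TensorProduct.assoc K g g g).toLinearMap
        ∘ₗ LinearMap.rTensor g (TensorProduct.comm K g g).toLinearMap
        ∘ₗ (TensorProduct.assoc K g g g).symm.toLinearMap)) ∧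
    -- `T ∘ (Id ⊗ μ) ∘ (Id ⊗ T) = (Id ⊗ μ) ∘ τ`
    (T ∘ₗ LinearMap.lTensor g μ ∘ₗ LinearMap.lTensor g T = LinearMap.lTensor g μ ∘ₗ τ) ∧
    -- `T ∘ (μ ⊗ Id) ∘ (T ⊗ Id) = (μ ⊗ Id) ∘ τ`
    (T ∘ₗ (LinearMap.rTensor g μ ∘ₗ (TensorProduct.assoc K g g g).symm.toLinearMap)
        ∘ₗ ((TensorProduct.assoc K g g g).toLinearMap
          ∘ₗ LinearMap.rTensor g T ∘ₗ (TensorProduct.assoc K g g g).symm.toLinearMap)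
      = (LinearMap.rTensor g μ ∘ₗ (TensorProduct.assoc K g g g).symm.toLinearMap) ∘ₗ τ) := by
  refine ⟨?_, ?_, ?_⟩ <;>
  · apply TensorProduct.ext
    apply LinearMap.ext; intro x
    apply TensorProduct.ext'
    intro y z
    simp only [LinearMap.comp_apply, LinearMap.compr₂ₛₗ_apply, TensorProduct.mk_apply,
      hτ, hT, map_add, LinearMap.lTensor_tmul, LinearMap.rTensor_tmul,
      LinearEquiv.coe_coe, TensorProduct.assoc_tmul, TensorProduct.assoc_symm_tmul,
      TensorProduct.comm_tmul, TensorProduct.tmul_add, TensorProduct.add_tmul, hRB]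
    abel
end

section
/- Let (g, [·,·]) be a Leibniz algebra over a field K of characteristic zero and let R : g → g be a Rota-Baxter operator, i.e. [Rx, Ry] = R([Rx, y] + [x, Ry]) for all x, y ∈ g. Then the bilinear operation [x, y]_R := [Rx, y] + [x, Ry] is a Leibniz algebra structure on g; that is, [x, [y, z]_R]_R = [[x, y]_R, z]_R + [y, [x, z]_R]_R for all x, y, z ∈ g. -/
/-- A Rota-Baxter operator `R` on a Leibniz algebra `(g, [·,·])` induces a new Leibniz
bracket `[x, y]_R = [Rx, y] + [x, Ry]` on `g`. -/
theorem stmt16 (K : Type*) [Field K] [CharZero K]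
    (g : Type*) [AddCommGroup g] [Module K g]
    (b : g →ₗ[K] g →ₗ[K] g)
    (hleib : ∀ x y z : g, b x (b y z) = b (b x y) z + b y (b x z))
    (R : g →ₗ[K] g)
    (hRB : ∀ x y : g, b (R x) (R y) = R (b (R x) y + b x (R y)))
    (brR : g → g → g)
    (hbrR : ∀ x y : g, brR x y = b (R x) y + b x (R y)) :
    ∀ x y z : g, brR x (brR y z) = brR (brR x y) z + brR y (brR x z) := by
  intro x y z
  simp only [hbrR, ← hRB, map_add, LinearMap.add_apply,
    hleib (R x) (R y) z, hleib (R x) y (R z), hleib x (R y) (R z)]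
  abel
end
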